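/- Suppose (Λ_n) satisfies Condition (D^Λ) and fix j ≤ q; set l_0 := j and z_{l_0} := 0. Then: (a) if i ∈ {0,1,…,b_j} satisfies (TIP_j), then 𝓛_{l_i} = 𝓛_j and λ_{l_i} = λ_j; (b) if 𝓛_j is a full-rank lattice of ℤ^k then every i ∈ {0,…,b_j} satisfies (TIP_j); (c) if D_j is bounded then no i ∈ {0,…,b_j} satisfies (TIP_j); (d) for every i ∈ W_j one has D̂_{l_i} = D̂_j; and (e) the set D̂_j ∪ {0} ∪ (−D̂_j) is invariant under translation by every point of 𝓛_j. -/

import Mathlib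

open scoped Classical Pointwise
open Filter Set

namespace Paper

/-- The index space `ℤ^k`. -/
abbrev V (k : ℕ) := Fin k → ℤ

variable {k : ℕ}

/-- Translate of a set: `(A)_t = {a + t : a ∈ A}`. -/
def tr (A : Set (V k)) (t : V k) : Set (V k) := (fun a => a + t) '' A

/-- Positive part of a set with respect to the order `prec`: `A⁺ = {a ∈ A : 0 ≺ a}`. -/
def posPart (prec : V k → V k → Prop) (A : Set (V k)) : Set (V k) := {a ∈ A | prec 0 a}

/-- The hypercube `K_c = ([-c,c] ∩ ℤ)^k`. -/
def Kc (k c : ℕ) : Set (V k) := {t : V k | ∀ i, |t i| ≤ (c : ℤ)}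

/-- `Λ^{(t,c)} = ((Λ)_{-t} ∩ K_c)⁺`. -/
def window (prec : V k → V k → Prop) (Λ : Set (V k)) (t : V k) (c : ℕ) : Set (V k) :=
  posPart prec (tr Λ (-t) ∩ Kc k c)

/-- A translation-invariant total (strict) order on `ℤ^k`. -/
structure IsTransOrder (prec : V k → V k → Prop) : Prop where
  trans : ∀ {a b c : V k}, prec a b → prec b c → prec a c
  irrefl : ∀ a : V k, ¬ prec a a
  total : ∀ a b : V k, a ≠ b → prec a b ∨ prec b a
  invariant : ∀ a b i : V k, prec a b → prec (a + i) (b + i)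

/-- Condition `(D^Λ)`: the index sets `Λ_n`, the asymptotic sets `D_1, …, D_q`
(`q ∈ ℕ ∪ {∞}`, indexed by `i : ℕ` with `(i : ℕ∞) < q`), and the weights. -/
structure CondD (k : ℕ) where
  prec : V k → V k → Prop
  ord : IsTransOrder prec
  Lam : ℕ → Finset (V k)
  card_top : Tendsto (fun n => (Lam n).card) atTop atTop
  q : ℕ∞
  D : ℕ → Set (V k)
  D_subset : ∀ i : ℕ, (i : ℕ∞) < q → D i ⊆ {t : V k | prec 0 t}
  D_ne : ∀ i j : ℕ, (i : ℕ∞) < q → (j : ℕ∞) < q → i ≠ j → D i ≠ D j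
  lamP : ℕ → ℕ → ℝ
  lam : ℕ → ℝ
  tendsto_lamP : ∀ i p : ℕ, (i : ℕ∞) < q →
    Tendsto (fun n =>
        (((Lam n).filter fun t => window prec (Lam n : Set (V k)) t p = D i ∩ Kc k p).card : ℝ) /
          ((Lam n).card : ℝ))
      atTop (nhds (lamP i p))
  tendsto_lam : ∀ i : ℕ, (i : ℕ∞) < q → Tendsto (fun p => lamP i p) atTop (nhds (lam i))
  lam_pos : ∀ i : ℕ, (i : ℕ∞) < q → 0 < lam i
  lam_sum : ∑' i : {i : ℕ // (i : ℕ∞) < q}, lam i.1 = 1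

/-- `((A)_{-z})⁺`, the shifted positive part of `A`. -/
def shiftPos (prec : V k → V k → Prop) (A : Set (V k)) (z : V k) : Set (V k) :=
  posPart prec (tr A (-z))

/-- `𝓖(A) = {z ∈ A ∪ {0} : ((A)_{-z})⁺ = A}`. -/
def Gset (prec : V k → V k → Prop) (A : Set (V k)) : Set (V k) :=
  {z ∈ insert (0 : V k) A | shiftPos prec A z = A}

/-- `𝓛(A) = 𝓖(A) ∪ (-𝓖(A))`. -/
def Lset (prec : V k → V k → Prop) (A : Set (V k)) : Set (V k) :=
  Gset prec A ∪ (-(Gset prec A))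

/-- The rank (as a free abelian group) of the subgroup of `ℤ^k` generated by `S`. -/
noncomputable def latticeRank (S : Set (V k)) : ℕ :=
  Module.finrank ℤ ↥(AddSubgroup.toIntSubmodule (AddSubgroup.closure S))

/-- The Translation Invariance Property of the shift `z` of the set `A`: some point of
`((𝓛(((A)_{-z})⁺))_z)⁺` precedes some point of `𝓖(A)`. -/
def TIPat (prec : V k → V k → Prop) (A : Set (V k)) (z : V k) : Prop :=
  ∃ x ∈ posPart prec (tr (Lset prec (shiftPos prec A z)) z), ∃ y ∈ Gset prec A, prec x y

/-- `D̂(A) = ⋃_{h ∈ W} D_{l_h}`: the union of the shifted sets `((A)_{-z})⁺`, over the shifts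
`z ∈ A ∪ {0}` satisfying the Translation Invariance Property. -/
def Dhat (prec : V k → V k → Prop) (A : Set (V k)) : Set (V k) :=
  ⋃ z ∈ {z ∈ insert (0 : V k) A | TIPat prec A z}, shiftPos prec A z

section Aux

variable {k : ℕ} {prec : V k → V k → Prop} {A B : Set (V k)}

/-! ### Order basics -/

theorem pos_add_pos (ho : IsTransOrder prec) {a b : V k}
    (ha : prec 0 a) (hb : prec 0 b) : prec 0 (a + b) := by
  have h1 : prec (0 + b) (a + b) := ho.invariant 0 a b ha
  rw [zero_add] at h1
  exact ho.trans hb h1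

theorem prec_iff_sub_pos (ho : IsTransOrder prec) {a b : V k} :
    prec a b ↔ prec 0 (b - a) := by
  constructor
  · intro h
    have h2 := ho.invariant a b (-a) h
    rw [add_neg_cancel, ← sub_eq_add_neg] at h2
    exact h2
  · intro h
    have h2 := ho.invariant 0 (b - a) a h
    rw [zero_add, sub_add_cancel] at h2
    exact h2

theorem pos_neg_of_neg (ho : IsTransOrder prec) {a : V k} (ha : prec a 0) : prec 0 (-a) := by
  have h2 := ho.invariant a 0 (-a) ha
  rw [add_neg_cancel, zero_add] at h2
  exact h2

theorem neg_of_pos (ho : IsTransOrder prec) {a : V k} (ha : prec 0 a) : prec (-a) 0 := by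
  have h2 := ho.invariant 0 a (-a) ha
  rw [add_neg_cancel, zero_add] at h2
  exact h2

theorem prec_trichotomy (ho : IsTransOrder prec) (a : V k) :
    a = 0 ∨ prec 0 a ∨ prec a 0 := by
  by_cases h : a = 0
  · exact Or.inl h
  · rcases ho.total 0 a (fun h0 => h h0.symm) with h1 | h1
    · exact Or.inr (Or.inl h1)
    · exact Or.inr (Or.inr h1)

theorem nsmul_prec_pos (ho : IsTransOrder prec) {g : V k} (hg : prec 0 g) :
    ∀ n : ℕ, 1 ≤ n → prec 0 (n • g) := by
  intro n hn
  induction n with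
  | zero => omega
  | succ m ih =>
      rcases Nat.eq_zero_or_pos m with rfl | hm
      · simpa using hg
      · rw [succ_nsmul]
        exact pos_add_pos ho (ih hm) hg

theorem zsmul_prec_pos (ho : IsTransOrder prec) {g : V k} (hg : prec 0 g)
    {a : ℤ} (ha : 1 ≤ a) : prec 0 (a • g) := by
  have h1 : a • g = a.toNat • g := by
    rw [← natCast_zsmul, Int.toNat_of_nonneg (by omega)]
  rw [h1]
  exact nsmul_prec_pos ho hg a.toNat (by omega)

/-! ### tr / posPart / shiftPos basics -/

theorem mem_tr {t u : V k} : u ∈ tr A t ↔ ∃ a ∈ A, a + t = u := Iff.rfl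

theorem tr_zero (A : Set (V k)) : tr A 0 = A := by
  ext u
  constructor
  · rintro ⟨a, ha, rfl⟩; simpa using ha
  · intro h; exact ⟨u, h, by simp⟩

theorem mem_shiftPos {z u : V k} :
    u ∈ shiftPos prec A z ↔ prec 0 u ∧ u + z ∈ A := by
  constructor
  · rintro ⟨⟨a, ha, rfl⟩, hpos⟩
    refine ⟨hpos, ?_⟩
    rwa [show a + -z + z = a by abel]
  · rintro ⟨hpos, hm⟩
    exact ⟨⟨u + z, hm, by show u + z + -z = u; abel⟩, hpos⟩

theorem shiftPos_subset_pos {z : V k} : shiftPos prec A z ⊆ {t | prec 0 t} :=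
  fun _ hu => (mem_shiftPos.1 hu).1

theorem shiftPos_zero (hA : A ⊆ {t | prec 0 t}) : shiftPos prec A 0 = A := by
  ext u
  rw [mem_shiftPos]
  constructor
  · rintro ⟨_, h⟩; simpa using h
  · intro h; exact ⟨hA h, by simpa using h⟩

theorem shiftPos_comp (ho : IsTransOrder prec) {z₁ z₂ : V k} (hz₂ : z₂ = 0 ∨ prec 0 z₂) :
    shiftPos prec A (z₁ + z₂) = shiftPos prec (shiftPos prec A z₁) z₂ := by
  ext u
  rw [mem_shiftPos, mem_shiftPos, mem_shiftPos]
  constructor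
  · rintro ⟨hu, hm⟩
    have hpos : prec 0 (u + z₂) := by
      rcases hz₂ with rfl | h
      · simpa using hu
      · exact pos_add_pos ho hu h
    exact ⟨hu, hpos, by rwa [show u + z₂ + z₁ = u + (z₁ + z₂) by abel]⟩
  · rintro ⟨hu, _, hm⟩
    exact ⟨hu, by rwa [show u + (z₁ + z₂) = u + z₂ + z₁ by abel]⟩

/-! ### Gset / Lset -/

theorem Gset_fix {g : V k} (hg : g ∈ Gset prec A) : shiftPos prec A g = A := hg.2

theorem mem_Gset_iff (hA : A ⊆ {t | prec 0 t}) {g : V k} :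
    g ∈ Gset prec A ↔ (g ∈ insert (0 : V k) A ∧ ∀ u, prec 0 u → (u ∈ A ↔ u + g ∈ A)) := by
  constructor
  · rintro ⟨h1, h2⟩
    refine ⟨h1, fun u hu => ?_⟩
    constructor
    · intro huA
      have h3 : u ∈ shiftPos prec A g := by rw [h2]; exact huA
      exact (mem_shiftPos.1 h3).2
    · intro huA
      have h3 : u ∈ shiftPos prec A g := mem_shiftPos.2 ⟨hu, huA⟩
      rw [h2] at h3
      exact h3
  · rintro ⟨h1, h2⟩
    refine ⟨h1, ?_⟩
    ext u
    rw [mem_shiftPos]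
    constructor
    · rintro ⟨hu, hug⟩
      exact (h2 u hu).2 hug
    · intro hu
      exact ⟨hA hu, (h2 u (hA hu)).1 hu⟩

theorem zero_mem_Gset (hA : A ⊆ {t | prec 0 t}) : (0 : V k) ∈ Gset prec A :=
  (mem_Gset_iff hA).2 ⟨Set.mem_insert _ _, fun u _ => by simp⟩

theorem Gset_pos_mem (hA : A ⊆ {t | prec 0 t}) {g : V k}
    (hg : g ∈ Gset prec A) (hne : g ≠ 0) : prec 0 g ∧ g ∈ A := by
  rcases Set.mem_insert_iff.1 ((mem_Gset_iff hA).1 hg).1 with h | h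
  · exact absurd h hne
  · exact ⟨hA h, h⟩

theorem Gset_shift_mem (hA : A ⊆ {t | prec 0 t}) {g u : V k}
    (hg : g ∈ Gset prec A) (hu : prec 0 u) : u ∈ A ↔ u + g ∈ A :=
  ((mem_Gset_iff hA).1 hg).2 u hu

theorem nng_add (ho : IsTransOrder prec) (hA : A ⊆ {t | prec 0 t}) {u g : V k}
    (hu : prec 0 u) (hg : g ∈ insert (0 : V k) A) : prec 0 (u + g) := by
  rcases Set.mem_insert_iff.1 hg with rfl | h
  · simpa using hu
  · exact pos_add_pos ho hu (hA h)

theorem Gset_add (ho : IsTransOrder prec) (hA : A ⊆ {t | prec 0 t}) {g₁ g₂ : V k}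
    (h1 : g₁ ∈ Gset prec A) (h2 : g₂ ∈ Gset prec A) : g₁ + g₂ ∈ Gset prec A := by
  have m1 := ((mem_Gset_iff hA).1 h1).1
  have m2 := ((mem_Gset_iff hA).1 h2).1
  rw [mem_Gset_iff hA]
  constructor
  · rcases Set.mem_insert_iff.1 m1 with rfl | hg1
    · simpa using m2
    · rcases Set.mem_insert_iff.1 m2 with rfl | hg2
      · simpa using Set.mem_insert_iff.2 (Or.inr hg1)
      · exact Set.mem_insert_iff.2 (Or.inr ((Gset_shift_mem hA h2 (hA hg1)).1 hg1))
  · intro u hu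
    have hpos : prec 0 (u + g₁) := nng_add ho hA hu m1
    rw [show u + (g₁ + g₂) = (u + g₁) + g₂ by abel]
    exact (Gset_shift_mem hA h1 hu).trans (Gset_shift_mem hA h2 hpos)

theorem nsmul_mem_Gset (ho : IsTransOrder prec) (hA : A ⊆ {t | prec 0 t}) {g : V k}
    (hg : g ∈ Gset prec A) : ∀ n : ℕ, n • g ∈ Gset prec A := by
  intro n
  induction n with
  | zero => simpa using zero_mem_Gset hA
  | succ m ih =>
      rw [succ_nsmul]
      exact Gset_add ho hA ih hg

theorem mem_Lset_iff {s : V k} :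
    s ∈ Lset prec A ↔ s ∈ Gset prec A ∨ -s ∈ Gset prec A := by
  unfold Lset
  rw [Set.mem_union, Set.mem_neg]

theorem zero_mem_Lset (hA : A ⊆ {t | prec 0 t}) : (0 : V k) ∈ Lset prec A :=
  mem_Lset_iff.2 (Or.inl (zero_mem_Gset hA))

theorem neg_mem_Lset {s : V k} (hs : s ∈ Lset prec A) : -s ∈ Lset prec A := by
  rw [mem_Lset_iff] at hs ⊢
  rcases hs with h | h
  · exact Or.inr (by simpa using h)
  · exact Or.inl h

theorem Lset_mono (h : Gset prec A ⊆ Gset prec B) : Lset prec A ⊆ Lset prec B := by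
  intro s hs
  rw [mem_Lset_iff] at hs ⊢
  rcases hs with h1 | h1
  · exact Or.inl (h h1)
  · exact Or.inr (h h1)

theorem Gset_sub_mem (ho : IsTransOrder prec) (hA : A ⊆ {t | prec 0 t}) {g₁ g₂ : V k}
    (h1 : g₁ ∈ Gset prec A) (h2 : g₂ ∈ Gset prec A)
    (hpos : prec 0 (g₁ - g₂)) : g₁ - g₂ ∈ Gset prec A := by
  rcases eq_or_ne g₂ 0 with rfl | hg2ne
  · simpa using h1
  obtain ⟨hg2pos, _⟩ := Gset_pos_mem hA h2 hg2ne
  have hg1pos : prec 0 g₁ := by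
    have h3 := pos_add_pos ho hpos hg2pos
    rwa [sub_add_cancel] at h3
  have hg1A : g₁ ∈ A := by
    rcases Set.mem_insert_iff.1 ((mem_Gset_iff hA).1 h1).1 with rfl | h
    · exact absurd hg1pos (ho.irrefl 0)
    · exact h
  have hmem : g₁ - g₂ ∈ A := by
    have h3 := (Gset_shift_mem hA h2 hpos)
    rw [sub_add_cancel] at h3
    exact h3.2 hg1A
  rw [mem_Gset_iff hA]
  refine ⟨Set.mem_insert_iff.2 (Or.inr hmem), fun u hu => ?_⟩
  have hpos2 : prec 0 (u + (g₁ - g₂)) := pos_add_pos ho hu hpos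
  have h3 := Gset_shift_mem hA h2 hpos2
  rw [show u + (g₁ - g₂) + g₂ = u + g₁ by abel] at h3
  exact (Gset_shift_mem hA h1 hu).trans h3.symm

theorem Lset_add (ho : IsTransOrder prec) (hA : A ⊆ {t | prec 0 t}) {s₁ s₂ : V k}
    (h1 : s₁ ∈ Lset prec A) (h2 : s₂ ∈ Lset prec A) : s₁ + s₂ ∈ Lset prec A := by
  rw [mem_Lset_iff] at h1 h2 ⊢
  have key : ∀ g₁ g₂ : V k, g₁ ∈ Gset prec A → g₂ ∈ Gset prec A →
      (g₁ - g₂ ∈ Gset prec A ∨ -(g₁ - g₂) ∈ Gset prec A) := by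
    intro g₁ g₂ hg1 hg2
    rcases prec_trichotomy ho (g₁ - g₂) with h | h | h
    · rw [h]; exact Or.inl (zero_mem_Gset hA)
    · exact Or.inl (Gset_sub_mem ho hA hg1 hg2 h)
    · refine Or.inr ?_
      have h3 : prec 0 (g₂ - g₁) := by
        have h4 := pos_neg_of_neg ho h
        rwa [neg_sub] at h4
      have h5 := Gset_sub_mem ho hA hg2 hg1 h3
      rwa [neg_sub]
  rcases h1 with h1 | h1 <;> rcases h2 with h2 | h2
  · exact Or.inl (Gset_add ho hA h1 h2)
  · have h3 := key s₁ (-s₂) h1 h2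
    rwa [sub_neg_eq_add] at h3
  · have h3 := key s₂ (-s₁) h2 h1
    rw [sub_neg_eq_add, add_comm s₂ s₁] at h3
    exact h3
  · refine Or.inr ?_
    have h3 := Gset_add ho hA h1 h2
    rwa [← neg_add] at h3

theorem Lset_pos_mem_Gset (ho : IsTransOrder prec) (hA : A ⊆ {t | prec 0 t}) {s : V k}
    (hs : s ∈ Lset prec A) (hpos : prec 0 s) : s ∈ Gset prec A := by
  rcases mem_Lset_iff.1 hs with h | h
  · exact h
  · rcases eq_or_ne s 0 with rfl | hne
    · exact absurd hpos (ho.irrefl 0)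
    · have hnegpos : prec 0 (-s) :=
        (Gset_pos_mem hA h (by simpa using hne)).1
      have := pos_add_pos ho hpos hnegpos
      rw [add_neg_cancel] at this
      exact absurd this (ho.irrefl 0)

theorem Gset_subset_shift (ho : IsTransOrder prec) (hA : A ⊆ {t | prec 0 t}) {z : V k}
    (hz : z ∈ A) : Gset prec A ⊆ Gset prec (shiftPos prec A z) := by
  intro g hg
  have hB : shiftPos prec A z ⊆ {t | prec 0 t} := shiftPos_subset_pos
  rcases eq_or_ne g 0 with rfl | hne
  · exact zero_mem_Gset hB
  obtain ⟨hgpos, _⟩ := Gset_pos_mem hA hg hne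
  have hzpos : prec 0 z := hA hz
  rw [mem_Gset_iff hB]
  constructor
  · refine Set.mem_insert_iff.2 (Or.inr ?_)
    rw [mem_shiftPos]
    refine ⟨hgpos, ?_⟩
    rw [show g + z = z + g by abel]
    exact (Gset_shift_mem hA hg hzpos).1 hz
  · intro u hu
    rw [mem_shiftPos, mem_shiftPos]
    have h1 : prec 0 (u + z) := pos_add_pos ho hu hzpos
    constructor
    · rintro ⟨_, h⟩
      refine ⟨pos_add_pos ho hu hgpos, ?_⟩
      rw [show u + g + z = (u + z) + g by abel]
      exact (Gset_shift_mem hA hg h1).1 h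
    · rintro ⟨_, h⟩
      refine ⟨hu, ?_⟩
      have h2 := (Gset_shift_mem hA hg h1)
      rw [show u + z + g = u + g + z by abel] at h2
      exact h2.2 h

theorem Gset_subset_shift' (ho : IsTransOrder prec) (hA : A ⊆ {t | prec 0 t}) {z : V k}
    (hz : z ∈ insert (0 : V k) A) : Gset prec A ⊆ Gset prec (shiftPos prec A z) := by
  rcases Set.mem_insert_iff.1 hz with rfl | h
  · rw [shiftPos_zero hA]
  · exact Gset_subset_shift ho hA h

end Aux
section Aux2

variable {k : ℕ} {prec : V k → V k → Prop} {A B : Set (V k)}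

theorem tipat_iff {z : V k} :
    TIPat prec A z ↔ ∃ w, w ∈ Lset prec (shiftPos prec A z) ∧ prec 0 (w + z) ∧
      ∃ y, y ∈ Gset prec A ∧ prec (w + z) y := by
  constructor
  · rintro ⟨x, ⟨⟨w, hw, rfl⟩, hxpos⟩, y, hy, hxy⟩
    exact ⟨w, hw, hxpos, y, hy, hxy⟩
  · rintro ⟨w, hw, hpos, y, hy, hxy⟩
    exact ⟨w + z, ⟨⟨w, hw, rfl⟩, hpos⟩, y, hy, hxy⟩

theorem mem_Dhat {u : V k} :
    u ∈ Dhat prec A ↔ ∃ z, (z ∈ insert (0 : V k) A ∧ TIPat prec A z) ∧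
      u ∈ shiftPos prec A z := by
  unfold Dhat
  simp only [Set.mem_iUnion, Set.mem_sep_iff, exists_prop]

/-- From the "nice" data produce the reverse shift. -/
theorem nice_pack (ho : IsTransOrder prec) (hA : A ⊆ {t | prec 0 t})
    {x y' : V k} (hx : x ∈ A) (hy' : y' ∈ Gset prec A) (hxy : prec x y')
    (hB : shiftPos prec A x = B) :
    ∃ v, v ∈ B ∧ shiftPos prec B v = A ∧ prec v y' ∧ Gset prec B = Gset prec A := by
  have hxpos : prec 0 x := hA hx
  have hy'ne : y' ≠ 0 := fun h => ho.irrefl 0 (ho.trans hxpos (h ▸ hxy))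
  obtain ⟨hy'pos, hy'A⟩ := Gset_pos_mem hA hy' hy'ne
  have hvpos : prec 0 (y' - x) := (prec_iff_sub_pos ho).1 hxy
  have hxv : x + (y' - x) = y' := by abel
  have hBv : shiftPos prec B (y' - x) = A := by
    have h1 : shiftPos prec A (x + (y' - x)) = shiftPos prec (shiftPos prec A x) (y' - x) :=
      shiftPos_comp ho (Or.inr hvpos)
    rw [hxv, Gset_fix hy', hB] at h1
    exact h1.symm
  have hvB : (y' - x) ∈ B := by
    rw [← hB, mem_shiftPos]
    refine ⟨hvpos, ?_⟩
    rw [show y' - x + x = y' by abel]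
    exact hy'A
  have hBpos : B ⊆ {t | prec 0 t} := by
    rw [← hB]; exact shiftPos_subset_pos
  have hG1 : Gset prec A ⊆ Gset prec B := by
    have h1 := Gset_subset_shift ho hA hx
    rwa [hB] at h1
  have hG2 : Gset prec B ⊆ Gset prec A := by
    have h1 := Gset_subset_shift ho hBpos hvB
    rwa [hBv] at h1
  have hvy : prec (y' - x) y' := by
    have h1 := ho.invariant (-x) 0 y' (neg_of_pos ho hxpos)
    rw [zero_add, show -x + y' = y' - x by abel] at h1
    exact h1
  exact ⟨y' - x, hvB, hBv, hvy, Set.Subset.antisymm hG2 hG1⟩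

theorem Gpos_mem_Dhat (ho : IsTransOrder prec) (hA : A ⊆ {t | prec 0 t}) {σ : V k}
    (hσ : σ ∈ Gset prec A) (hne : σ ≠ 0) : σ ∈ Dhat prec A := by
  obtain ⟨hσpos, hσA⟩ := Gset_pos_mem hA hσ hne
  rw [mem_Dhat]
  refine ⟨0, ⟨Set.mem_insert _ _, ?_⟩, ?_⟩
  · rw [tipat_iff]
    refine ⟨σ, ?_, ?_, σ + σ, Gset_add ho hA hσ hσ, ?_⟩
    · rw [shiftPos_zero hA]
      exact mem_Lset_iff.2 (Or.inl hσ)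
    · simpa using hσpos
    · have h1 := ho.invariant 0 σ σ hσpos
      rw [zero_add] at h1
      rw [add_zero]
      exact h1
  · rw [shiftPos_zero hA]
    exact hσA

theorem dhat_subset (ho : IsTransOrder prec) (hA : A ⊆ {t | prec 0 t})
    (hGeq : Gset prec B = Gset prec A) {x y₀ : V k} (hx : x ∈ A)
    (hBx : shiftPos prec A x = B) (hy₀ : y₀ ∈ Gset prec A) (hxy₀ : prec x y₀) :
    Dhat prec B ⊆ Dhat prec A := by
  intro u hu
  rw [mem_Dhat] at hu ⊢
  obtain ⟨ζ, ⟨hζm, hζt⟩, huζ⟩ := hu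
  have hB : B ⊆ {t | prec 0 t} := by rw [← hBx]; exact shiftPos_subset_pos
  have hζnng : ζ = 0 ∨ prec 0 ζ := by
    rcases Set.mem_insert_iff.1 hζm with rfl | h
    · exact Or.inl rfl
    · exact Or.inr (hB h)
  have hcomp : shiftPos prec A (x + ζ) = shiftPos prec B ζ := by
    rw [shiftPos_comp ho hζnng, hBx]
  refine ⟨x + ζ, ⟨?_, ?_⟩, ?_⟩
  · rcases Set.mem_insert_iff.1 hζm with rfl | hζB
    · exact Set.mem_insert_iff.2 (Or.inr (by simpa using hx))
    · refine Set.mem_insert_iff.2 (Or.inr ?_)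
      have hζB' : ζ ∈ shiftPos prec A x := by rw [hBx]; exact hζB
      have h1 := (mem_shiftPos.1 hζB').2
      rwa [add_comm] at h1
  · obtain ⟨w₂, hw₂L, hw₂pos, y₂, hy₂G, hxy₂⟩ := tipat_iff.1 hζt
    rw [tipat_iff]
    refine ⟨w₂, ?_, ?_, y₂ + y₀, Gset_add ho hA (hGeq ▸ hy₂G) hy₀, ?_⟩
    · rw [hcomp]; exact hw₂L
    · rw [show w₂ + (x + ζ) = (w₂ + ζ) + x by abel]
      exact pos_add_pos ho hw₂pos (hA hx)
    · rw [show w₂ + (x + ζ) = (w₂ + ζ) + x by abel]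
      have h1 : prec ((w₂ + ζ) + x) (y₂ + x) := ho.invariant _ _ x hxy₂
      have h2 : prec (y₂ + x) (y₂ + y₀) := by
        have h3 := ho.invariant x y₀ y₂ hxy₀
        rwa [add_comm x y₂, add_comm y₀ y₂] at h3
      exact ho.trans h1 h2
  · rw [hcomp]; exact huζ

theorem dhat_shift (ho : IsTransOrder prec) (hA : A ⊆ {t | prec 0 t}) {a s : V k}
    (haD : a ∈ Dhat prec A) (hs : s ∈ Lset prec A) :
    a + s ∈ Dhat prec A ∪ {0} ∪ (-(Dhat prec A)) := by
  obtain ⟨ζ, ⟨hζm, hζt⟩, haζ⟩ := mem_Dhat.1 haD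
  have hZpos : shiftPos prec A ζ ⊆ {t | prec 0 t} := shiftPos_subset_pos
  have hGsub : Gset prec A ⊆ Gset prec (shiftPos prec A ζ) := Gset_subset_shift' ho hA hζm
  have hapos : prec 0 a := hZpos haζ
  rcases mem_Lset_iff.1 hs with hσ | hσ
  · left; left
    rw [mem_Dhat]
    have hpos : prec 0 (a + s) := nng_add ho hZpos hapos
      (Set.mem_insert_iff.2 (by
        rcases eq_or_ne s 0 with rfl | hne
        · exact Or.inl rfl
        · exact Or.inr (Gset_pos_mem hZpos (hGsub hσ) hne).2))
    exact ⟨ζ, ⟨hζm, hζt⟩, (Gset_shift_mem hZpos (hGsub hσ) hapos).1 haζ⟩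
  · -- -s ∈ Gset A
    have hσG : -s ∈ Gset prec A := hσ
    rcases prec_trichotomy ho (a + s) with h0 | hpos | hneg
    · rw [h0]; left; right; rfl
    · left; left
      rw [mem_Dhat]
      refine ⟨ζ, ⟨hζm, hζt⟩, ?_⟩
      refine (Gset_shift_mem hZpos (hGsub hσG) hpos).2 ?_
      rw [show (a + s) + -s = a by abel]
      exact haζ
    · -- the hard case
      right
      rw [Set.mem_neg]
      have hbpos : prec 0 (-(a + s)) := pos_neg_of_neg ho hneg
      have hsne : -s ≠ 0 := by
        intro h0
        have hs0 : s = 0 := by simpa using h0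
        rw [hs0, add_zero] at hneg
        exact ho.irrefl 0 (ho.trans hapos hneg)
      have hbeq : -(a + s) = -s - a := by abel
      have haσ : prec a (-s) := by
        rw [prec_iff_sub_pos ho]
        rw [hbeq] at hbpos
        exact hbpos
      have hζ₃A : ζ + a ∈ A := by
        rcases Set.mem_insert_iff.1 hζm with rfl | hζA
        · rw [zero_add]
          have h1 := haζ
          rw [shiftPos_zero hA] at h1
          exact h1
        · have h1 := (mem_shiftPos.1 haζ).2
          rwa [add_comm] at h1
      rw [mem_Dhat]
      refine ⟨ζ + a, ⟨Set.mem_insert_iff.2 (Or.inr hζ₃A), ?_⟩, ?_⟩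
      · obtain ⟨w₂, hw₂L, hw₂pos, y₂, hy₂G, hxy₂⟩ := tipat_iff.1 hζt
        rw [tipat_iff]
        have hcomp : shiftPos prec A (ζ + a) = shiftPos prec (shiftPos prec A ζ) a :=
          shiftPos_comp ho (Or.inr hapos)
        refine ⟨w₂, ?_, ?_, y₂ + -s, Gset_add ho hA hy₂G hσG, ?_⟩
        · rw [hcomp]
          exact Lset_mono (Gset_subset_shift ho hZpos haζ) hw₂L
        · rw [show w₂ + (ζ + a) = (w₂ + ζ) + a by abel]
          exact pos_add_pos ho hw₂pos hapos
        · rw [show w₂ + (ζ + a) = (w₂ + ζ) + a by abel]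
          have h1 : prec ((w₂ + ζ) + a) (y₂ + a) := ho.invariant _ _ a hxy₂
          have h2 : prec (y₂ + a) (y₂ + -s) := by
            have h3 := ho.invariant a (-s) y₂ haσ
            rwa [add_comm a y₂, add_comm (-s) y₂] at h3
          exact ho.trans h1 h2
      · rw [mem_shiftPos]
        refine ⟨hbpos, ?_⟩
        rw [show -(a + s) + (ζ + a) = ζ + -s by abel]
        rcases Set.mem_insert_iff.1 hζm with rfl | hζA
        · rw [zero_add]
          exact (Gset_pos_mem hA hσG hsne).2
        · exact (Gset_shift_mem hA hσG (hA hζA)).1 hζA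

end Aux2
section Aux3

variable {k : ℕ} {prec : V k → V k → Prop}

/-! ### Kc basics -/

theorem Kc_mono {c c' : ℕ} (h : c ≤ c') : Kc k c ⊆ Kc k c' :=
  fun t ht i => le_trans (ht i) (by exact_mod_cast h)

theorem mem_Kc_add {u v : V k} {a b : ℕ} (hu : u ∈ Kc k a) (hv : v ∈ Kc k b) :
    u + v ∈ Kc k (a + b) := by
  intro i
  show |u i + v i| ≤ ((a + b : ℕ) : ℤ)
  push_cast
  have h1 := hu i
  have h2 := hv i
  have h3 := abs_add_le (u i) (v i)
  linarith

theorem mem_Kc_neg {u : V k} {a : ℕ} (hu : u ∈ Kc k a) : -u ∈ Kc k a := by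
  intro i
  show |(-(u i))| ≤ ((a : ℕ) : ℤ)
  rw [abs_neg]
  exact hu i

theorem mem_Kc_zsmul {v : V k} {m : ℕ} (hv : v ∈ Kc k m) {a : ℤ} {c : ℕ}
    (ha : |a| ≤ (c : ℤ)) : a • v ∈ Kc k (c * m) := by
  intro i
  show |a * v i| ≤ ((c * m : ℕ) : ℤ)
  rw [abs_mul]
  push_cast
  have h1 := hv i
  have h2 : |a| * |v i| ≤ (c : ℤ) * (m : ℤ) :=
    mul_le_mul ha h1 (abs_nonneg _) (by positivity)
  linarith

theorem mem_Kc_nsmul {v : V k} {m : ℕ} (hv : v ∈ Kc k m) {n p : ℕ} (hn : n ≤ p) :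
    n • v ∈ Kc k (p * m) := by
  have h1 : (n : ℤ) • v = n • v := natCast_zsmul v n
  rw [← h1]
  exact mem_Kc_zsmul hv (by
    rw [abs_of_nonneg (by positivity)]
    exact_mod_cast hn)

theorem exists_mem_Kc (v : V k) : ∃ c : ℕ, v ∈ Kc k c := by
  refine ⟨Finset.univ.sup fun i => (v i).natAbs, fun i => ?_⟩
  have h := Finset.le_sup (f := fun i => (v i).natAbs) (Finset.mem_univ i)
  rw [Int.abs_eq_natAbs]
  exact_mod_cast h

/-! ### window basics -/

theorem mem_window {Λ : Set (V k)} {t u : V k} {c : ℕ} :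
    u ∈ window prec Λ t c ↔ prec 0 u ∧ u ∈ Kc k c ∧ t + u ∈ Λ := by
  constructor
  · rintro ⟨⟨⟨a, ha, rfl⟩, h2⟩, h3⟩
    refine ⟨h3, h2, ?_⟩
    rwa [show t + (a + -t) = a by abel]
  · rintro ⟨h1, h2, h3⟩
    exact ⟨⟨⟨t + u, h3, by show t + u + -t = u; abel⟩, h2⟩, h1⟩

theorem window_restrict {Λ : Set (V k)} {t : V k} {P P' : ℕ} (hPP : P ≤ P')
    {E : Set (V k)} (hw : window prec Λ t P' = E ∩ Kc k P') :
    window prec Λ t P = E ∩ Kc k P := by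
  ext u
  rw [mem_window]
  constructor
  · rintro ⟨h1, h2, h3⟩
    have h4 : u ∈ window prec Λ t P' := mem_window.2 ⟨h1, Kc_mono hPP h2, h3⟩
    rw [hw] at h4
    exact ⟨h4.1, h2⟩
  · rintro ⟨hE, hK⟩
    have h4 : u ∈ E ∩ Kc k P' := ⟨hE, Kc_mono hPP hK⟩
    rw [← hw] at h4
    rcases mem_window.1 h4 with ⟨h1, _, h3⟩
    exact ⟨h1, hK, h3⟩

theorem window_mem_trans {Λ : Set (V k)} {t v : V k} {P : ℕ} {E : Set (V k)}
    (hw : window prec Λ t P = E ∩ Kc k P) (hv : v ∈ E) (hvK : v ∈ Kc k P) :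
    t + v ∈ Λ := by
  have h1 : v ∈ window prec Λ t P := by rw [hw]; exact ⟨hv, hvK⟩
  exact (mem_window.1 h1).2.2

theorem window_period (ho : IsTransOrder prec) {Λ : Set (V k)} {t δ : V k}
    {Q Rc c' : ℕ} {E : Set (V k)}
    (hw : window prec Λ t Q = E ∩ Kc k Q)
    (hw' : window prec Λ (t + δ) Q = E ∩ Kc k Q)
    (hδpos : prec 0 δ) (hδK : δ ∈ Kc k c') (hRc : Rc + c' ≤ Q)
    {u : V k} (hu : prec 0 u) (huK : u ∈ Kc k Rc) :
    u ∈ E ↔ u + δ ∈ E := by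
  have huQ : u ∈ Kc k Q := Kc_mono (by omega) huK
  have huδQ : u + δ ∈ Kc k Q := Kc_mono hRc (mem_Kc_add huK hδK)
  have huδpos : prec 0 (u + δ) := pos_add_pos ho hu hδpos
  constructor
  · intro h
    have h1 : u ∈ window prec Λ (t + δ) Q := by rw [hw']; exact ⟨h, huQ⟩
    have h2 := (mem_window.1 h1).2.2
    have h3 : u + δ ∈ window prec Λ t Q := mem_window.2 ⟨huδpos, huδQ, by
      rwa [show t + (u + δ) = (t + δ) + u by abel]⟩
    rw [hw] at h3
    exact h3.1
  · intro h
    have h3 : u + δ ∈ window prec Λ t Q := by rw [hw]; exact ⟨h, huδQ⟩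
    have h2 := (mem_window.1 h3).2.2
    have h1 : u ∈ window prec Λ (t + δ) Q := mem_window.2 ⟨hu, huQ, by
      rwa [show (t + δ) + u = t + (u + δ) by abel]⟩
    rw [hw'] at h1
    exact h1.1

theorem window_shift (ho : IsTransOrder prec) {Λ E : Set (V k)} {t x : V k} {P p c : ℕ}
    (hE : E ⊆ {t | prec 0 t})
    (hw : window prec Λ t P = E ∩ Kc k P)
    (hx : x ∈ E) (hxK : x ∈ Kc k c) (hpc : p + c ≤ P) :
    window prec Λ (t + x) p = (shiftPos prec E x) ∩ Kc k p := by
  have hxpos : prec 0 x := hE hx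
  ext u
  rw [mem_window, Set.mem_inter_iff, mem_shiftPos]
  constructor
  · rintro ⟨hu, huK, hmem⟩
    refine ⟨⟨hu, ?_⟩, huK⟩
    have h1 : u + x ∈ window prec Λ t P := mem_window.2 ⟨pos_add_pos ho hu hxpos,
      Kc_mono hpc (mem_Kc_add huK hxK), by
        rwa [show t + (u + x) = (t + x) + u by abel]⟩
    rw [hw] at h1
    exact h1.1
  · rintro ⟨⟨hu, huxE⟩, huK⟩
    refine ⟨hu, huK, ?_⟩
    have h1 : u + x ∈ window prec Λ t P := by
      rw [hw]
      exact ⟨huxE, Kc_mono hpc (mem_Kc_add huK hxK)⟩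
    have h2 := (mem_window.1 h1).2.2
    rwa [show t + (u + x) = (t + x) + u by abel] at h2

end Aux3

section Analytic

variable {k : ℕ} {C : CondD k}

theorem div_card_mono {a b : ℕ} (n : ℕ) (h : a ≤ b) : (a : ℝ) / (n : ℝ) ≤ (b : ℝ) / (n : ℝ) :=
  div_le_div_of_nonneg_right (by exact_mod_cast h) (Nat.cast_nonneg n)

theorem lamP_anti {i : ℕ} (hi : (i : ℕ∞) < C.q) {P P' : ℕ} (h : P ≤ P') :
    C.lamP i P' ≤ C.lamP i P := by
  refine le_of_tendsto_of_tendsto' (C.tendsto_lamP i P' hi) (C.tendsto_lamP i P hi)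
    (fun n => ?_)
  refine div_card_mono _ (Finset.card_le_card ?_)
  intro t ht
  rw [Finset.mem_filter] at ht ⊢
  exact ⟨ht.1, window_restrict h ht.2⟩

theorem lam_le_lamP {i : ℕ} (hi : (i : ℕ∞) < C.q) (P : ℕ) : C.lam i ≤ C.lamP i P := by
  refine le_of_tendsto (C.tendsto_lam i hi) ?_
  filter_upwards [Filter.eventually_ge_atTop P] with p hp
  exact lamP_anti hi hp

theorem lam_shift_le {i l : ℕ} (hi : (i : ℕ∞) < C.q) (hl : (l : ℕ∞) < C.q)
    {x : V k} (hx : x ∈ C.D i) (hsh : shiftPos C.prec (C.D i) x = C.D l) :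
    C.lam i ≤ C.lam l := by
  obtain ⟨c, hc⟩ := exists_mem_Kc x
  have key : ∀ p : ℕ, C.lamP i (p + c) ≤ C.lamP l p := by
    intro p
    refine le_of_tendsto_of_tendsto' (C.tendsto_lamP i (p + c) hi)
      (C.tendsto_lamP l p hl) (fun n => ?_)
    refine div_card_mono _ ?_
    refine Finset.card_le_card_of_injOn (fun t => t + x) (fun t ht => ?_)
      (fun t1 _ t2 _ h12 => add_left_injective x h12)
    rw [Finset.mem_coe, Finset.mem_filter] at ht ⊢
    obtain ⟨htΛ, hw⟩ := ht
    constructor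
    · have h1 : t + x ∈ ((C.Lam n : Set (V k))) :=
        window_mem_trans hw hx (Kc_mono (by omega) hc)
      exact_mod_cast h1
    · have h2 := window_shift C.ord (C.D_subset i hi) hw hx hc (le_refl _)
      rwa [hsh] at h2
  have h1 : ∀ p, C.lam i ≤ C.lamP l p := fun p => le_trans (lam_le_lamP hi (p + c)) (key p)
  exact ge_of_tendsto (C.tendsto_lam l hl) (Filter.Eventually.of_forall h1)

end Analytic
section Big

variable {k : ℕ}

/-- The key consequence of `TIPat`: a "nice" witness `x ∈ D_j` with
`((D_j)_{-x})⁺ = ((D_j)_{-z})⁺` and `x ≺ y'` for some `y' ∈ 𝓖_j`. -/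
theorem nice_of_tip (C : CondD k) {j : ℕ} (hj : (j : ℕ∞) < C.q) {z : V k}
    (hz : z ∈ C.D j) (ht : TIPat C.prec (C.D j) z) :
    ∃ x y', x ∈ C.D j ∧ y' ∈ Gset C.prec (C.D j) ∧ C.prec x y' ∧
      shiftPos C.prec (C.D j) x = shiftPos C.prec (C.D j) z := by
  classical
  have ho := C.ord
  have hDpos : C.D j ⊆ {t | C.prec 0 t} := C.D_subset j hj
  have hDzpos : shiftPos C.prec (C.D j) z ⊆ {t | C.prec 0 t} := shiftPos_subset_pos
  obtain ⟨w, hwL, hxpos, y, hyG, hxy⟩ := tipat_iff.1 ht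
  -- general finishing move
  have finish : ∀ x₁ : V k, C.prec x₁ y →
      (∀ u, C.prec 0 u → (u + x₁ ∈ C.D j ↔ u ∈ shiftPos C.prec (C.D j) z)) →
      x₁ ∈ C.D j →
      (∃ x y', x ∈ C.D j ∧ y' ∈ Gset C.prec (C.D j) ∧ C.prec x y' ∧
        shiftPos C.prec (C.D j) x = shiftPos C.prec (C.D j) z) := by
    intro x₁ hx₁y hkey hx₁D
    refine ⟨x₁, y, hx₁D, hyG, hx₁y, ?_⟩
    ext u
    constructor
    · intro h
      obtain ⟨hu, hm⟩ := mem_shiftPos.1 h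
      exact (hkey u hu).1 hm
    · intro h
      exact mem_shiftPos.2 ⟨hDzpos h, (hkey u (hDzpos h)).2 h⟩
  rcases mem_Lset_iff.1 hwL with hwG | hwG
  · -- `w ∈ 𝓖(D^z)` : purely combinatorial case
    have hwnng : w = 0 ∨ C.prec 0 w := by
      rcases eq_or_ne w 0 with rfl | hne
      · exact Or.inl rfl
      · exact Or.inr (Gset_pos_mem hDzpos hwG hne).1
    refine finish (w + z) hxy (fun u hu => ?_) ?_
    · have h1 : shiftPos C.prec (C.D j) (z + w) = shiftPos C.prec (C.D j) z := by
        rw [shiftPos_comp ho hwnng, Gset_fix hwG]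
      constructor
      · intro h
        have h2 : u ∈ shiftPos C.prec (C.D j) (z + w) := mem_shiftPos.2 ⟨hu, by
          rwa [show u + (z + w) = u + (w + z) by abel]⟩
        rwa [h1] at h2
      · intro h
        rw [← h1] at h
        have h2 := (mem_shiftPos.1 h).2
        rwa [show u + (z + w) = u + (w + z) by abel] at h2
    · rcases eq_or_ne w 0 with rfl | hne
      · simpa using hz
      · have h1 := (Gset_pos_mem hDzpos hwG hne).2
        exact (mem_shiftPos.1 h1).2
  · -- `-w ∈ 𝓖(D^z)`
    rcases eq_or_ne w 0 with rfl | hwne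
    · -- degenerate: same as the first case with `w = 0`
      refine finish (0 + z) hxy (fun u hu => ?_) (by simpa using hz)
      rw [mem_shiftPos]
      constructor
      · intro h
        exact ⟨hu, by rwa [show u + z = u + (0 + z) by abel]⟩
      · rintro ⟨_, h⟩
        rwa [show u + (0 + z) = u + z by abel]
    have hg₀G : -w ∈ Gset C.prec (shiftPos C.prec (C.D j) z) := hwG
    have hg₀ne : -w ≠ 0 := by simpa using hwne
    have hg₀pos : C.prec 0 (-w) := (Gset_pos_mem hDzpos hg₀G hg₀ne).1
    obtain ⟨cz, hcz⟩ := exists_mem_Kc z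
    obtain ⟨cg, hcg⟩ := exists_mem_Kc (-w)
    set M : ℕ := cz + cg + 1 with hM
    have hM1 : 1 ≤ M := by omega
    have hczM : z ∈ Kc k M := Kc_mono (by omega) hcz
    have hcgM : -w ∈ Kc k M := Kc_mono (by omega) hcg
    have hx₁K : w + z ∈ Kc k (M + M) := by
      have h1 : w + z = z + -(-w) := by abel
      rw [h1]
      exact mem_Kc_add hczM (mem_Kc_neg hcgM)
    by_cases hAB : ∀ P : ℕ, ∃ p, P ≤ p ∧ ∃ a : ℤ, 1 ≤ a ∧ a ≤ (p : ℤ) ∧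
        ∀ u : V k, C.prec 0 u → u ∈ Kc k (10 * M * (p + 1)) →
          (u ∈ C.D j ↔ u + a • (-w) ∈ C.D j)
    · -- Case A : approximate periods exist at arbitrarily large scales
      -- useful: the iterated step lands above `z`
      have estep : ∀ a : ℤ, 1 ≤ a →
          C.prec 0 ((2 * a - 1) • (-w)) ∧
          (2 * a - 1) • (-w) ∈ Gset C.prec (shiftPos C.prec (C.D j) z) ∧
          ∀ u : V k, u + (w + z) + a • (-w) + a • (-w) = (u + (2 * a - 1) • (-w)) + z := by
        intro a ha
        refine ⟨zsmul_prec_pos ho hg₀pos (by omega), ?_, ?_⟩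
        · have h1 : (2 * a - 1) • (-w) = ((2 * a - 1).toNat) • (-w) := by
            rw [← natCast_zsmul, Int.toNat_of_nonneg (by omega)]
          rw [h1]
          exact nsmul_mem_Gset ho hDzpos hg₀G _
        · intro u
          have hsm : (2 * a - 1) • (-w) = a • (-w) + a • (-w) + w := by
            rw [sub_zsmul, one_zsmul, show (2 * a) = a + a by ring, add_zsmul]
            abel
          rw [hsm]
          abel
      have hkey : ∀ u, C.prec 0 u →
          (u + (w + z) ∈ C.D j ↔ u ∈ shiftPos C.prec (C.D j) z) := by
        intro u hu
        obtain ⟨cu, hcu⟩ := exists_mem_Kc u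
        obtain ⟨p, hp, a, ha1, hap, hper⟩ := hAB (cu + 1)
        obtain ⟨hepos, heG, herew⟩ := estep a ha1
        have haK : a • (-w) ∈ Kc k (p * M) := mem_Kc_zsmul hcgM (by
          rw [abs_of_nonneg (by omega)]; exact hap)
        have hn1 : u + (w + z) ∈ Kc k (cu + (M + M)) := mem_Kc_add hcu hx₁K
        have hn1' : u + (w + z) ∈ Kc k (10 * M * (p + 1)) := by
          refine Kc_mono ?_ hn1
          nlinarith
        have hn2 : u + (w + z) + a • (-w) ∈ Kc k (cu + (M + M) + p * M) :=
          mem_Kc_add hn1 haK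
        have hn2' : u + (w + z) + a • (-w) ∈ Kc k (10 * M * (p + 1)) := by
          refine Kc_mono ?_ hn2
          nlinarith
        have hpos1 : C.prec 0 (u + (w + z)) := pos_add_pos ho hu hxpos
        have hpos2 : C.prec 0 (u + (w + z) + a • (-w)) :=
          pos_add_pos ho hpos1 (zsmul_prec_pos ho hg₀pos ha1)
        have s1 : u + (w + z) ∈ C.D j ↔ u + (w + z) + a • (-w) ∈ C.D j :=
          hper _ hpos1 hn1'
        have s2 : u + (w + z) + a • (-w) ∈ C.D j ↔
            u + (w + z) + a • (-w) + a • (-w) ∈ C.D j := hper _ hpos2 hn2'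
        have s4 : (u + (2 * a - 1) • (-w)) + z ∈ C.D j ↔
            u + (2 * a - 1) • (-w) ∈ shiftPos C.prec (C.D j) z :=
          ⟨fun h => mem_shiftPos.2 ⟨pos_add_pos ho hu hepos, h⟩,
           fun h => (mem_shiftPos.1 h).2⟩
        have s5 : u + (2 * a - 1) • (-w) ∈ shiftPos C.prec (C.D j) z ↔
            u ∈ shiftPos C.prec (C.D j) z :=
          (Gset_shift_mem hDzpos heG hu).symm
        rw [s1, s2, herew u, s4, s5]
      have hx₁D : w + z ∈ C.D j := by
        obtain ⟨p, hp, a, ha1, hap, hper⟩ := hAB 1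
        obtain ⟨hepos, heG, herew⟩ := estep a ha1
        have haK : a • (-w) ∈ Kc k (p * M) := mem_Kc_zsmul hcgM (by
          rw [abs_of_nonneg (by omega)]; exact hap)
        have hn1' : w + z ∈ Kc k (10 * M * (p + 1)) := by
          refine Kc_mono ?_ hx₁K
          nlinarith
        have hn2' : w + z + a • (-w) ∈ Kc k (10 * M * (p + 1)) := by
          refine Kc_mono ?_ (mem_Kc_add hx₁K haK)
          nlinarith
        have hpos2 : C.prec 0 (w + z + a • (-w)) :=
          pos_add_pos ho hxpos (zsmul_prec_pos ho hg₀pos ha1)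
        have s1 : w + z ∈ C.D j ↔ w + z + a • (-w) ∈ C.D j := hper _ hxpos hn1'
        have s2 : w + z + a • (-w) ∈ C.D j ↔ w + z + a • (-w) + a • (-w) ∈ C.D j :=
          hper _ hpos2 hn2'
        have herew0 : w + z + a • (-w) + a • (-w) = ((2 * a - 1) • (-w)) + z := by
          have h1 := herew 0
          rw [zero_add, zero_add] at h1
          exact h1
        have heDz : (2 * a - 1) • (-w) ∈ shiftPos C.prec (C.D j) z :=
          (Gset_pos_mem hDzpos heG (fun h0 => ho.irrefl 0 (h0 ▸ hepos))).2
        rw [s1, s2, herew0]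
        exact (mem_shiftPos.1 heDz).2
      exact finish (w + z) hxy hkey hx₁D
    · -- Case B : density contradiction
      exfalso
      rw [not_forall] at hAB
      obtain ⟨P₀, hP₀'⟩ := hAB
      have hP₀ : ∀ p, P₀ ≤ p → ¬ (∃ a : ℤ, 1 ≤ a ∧ a ≤ (p : ℤ) ∧
          ∀ u : V k, C.prec 0 u → u ∈ Kc k (10 * M * (p + 1)) →
            (u ∈ C.D j ↔ u + a • (-w) ∈ C.D j)) := by
        intro p hp hbad
        exact hP₀' ⟨p, hp, hbad⟩
      have hlampos := C.lam_pos j hj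
      obtain ⟨n₀, hn₀⟩ := exists_nat_gt (1 / C.lam j)
      set p : ℕ := max n₀ P₀ with hpdef
      have hpP₀ : P₀ ≤ p := le_max_right _ _
      set Q : ℕ := 20 * M * (p + 1) with hQdef
      -- counting inequality for every n
      have hcount : ∀ n : ℕ,
          ((C.Lam n).filter fun t =>
              window C.prec (↑(C.Lam n)) t Q = C.D j ∩ Kc k Q).card * (p + 1)
            ≤ (C.Lam n).card := by
        intro n
        set T := (C.Lam n).filter fun t =>
          window C.prec (↑(C.Lam n)) t Q = C.D j ∩ Kc k Q with hT
        have hmaps : ∀ x ∈ T ×ˢ Finset.range (p + 1),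
            (fun q : V k × ℕ => q.1 + (z + q.2 • (-w))) x ∈ C.Lam n := by
          rintro ⟨t, i⟩ hx
          rw [Finset.mem_product, Finset.mem_range] at hx
          obtain ⟨htT, hi⟩ := hx
          rw [hT, Finset.mem_filter] at htT
          obtain ⟨htΛ, hw⟩ := htT
          have hγD : z + i • (-w) ∈ C.D j := by
            rcases Nat.eq_zero_or_pos i with rfl | hipos
            · simpa using hz
            · have h1 : i • (-w) ∈ Gset C.prec (shiftPos C.prec (C.D j) z) :=
                nsmul_mem_Gset ho hDzpos hg₀G i
              have h2 : C.prec 0 (i • (-w)) := nsmul_prec_pos ho hg₀pos i hipos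
              have h3 : i • (-w) ∈ shiftPos C.prec (C.D j) z :=
                (Gset_pos_mem hDzpos h1 (fun h0 => ho.irrefl 0 (h0 ▸ h2))).2
              have h4 := (mem_shiftPos.1 h3).2
              rwa [add_comm] at h4
          have hγK : z + i • (-w) ∈ Kc k Q := by
            have h1 : i • (-w) ∈ Kc k (p * M) := mem_Kc_nsmul hcgM (by omega)
            refine Kc_mono ?_ (mem_Kc_add hczM h1)
            rw [hQdef]
            nlinarith
          have h5 : t + (z + i • (-w)) ∈ ((C.Lam n : Set (V k))) :=
            window_mem_trans hw hγD hγK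
          exact_mod_cast h5
        have hbadmk : ∀ s s' : V k, ∀ b b' : ℕ, s ∈ T → s' ∈ T → b' < b → b < p + 1 →
            s + b • (-w) = s' + b' • (-w) → False := by
          intro s s' b b' hsT hs'T hbb hbp heqq
          rw [hT, Finset.mem_filter] at hsT hs'T
          have hδ : s' = s + (b - b') • (-w) := by
            have h1 : s + (b - b') • (-w) + b' • (-w) = s + b • (-w) := by
              rw [add_assoc, ← add_nsmul, Nat.sub_add_cancel (by omega)]
            have h2 : s + (b - b') • (-w) + b' • (-w) = s' + b' • (-w) := by
              rw [h1, heqq]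
            exact (add_left_injective _ h2).symm
          refine hP₀ p hpP₀ ⟨((b : ℤ) - b'), by omega, by omega, ?_⟩
          intro u hu huK
          have hδK : (b - b') • (-w) ∈ Kc k (p * M) := mem_Kc_nsmul hcgM (by omega)
          have hδpos : C.prec 0 ((b - b') • (-w)) :=
            nsmul_prec_pos ho hg₀pos _ (by omega)
          have hper := window_period ho hsT.2 (hδ ▸ hs'T.2) hδpos hδK
            (show 10 * M * (p + 1) + p * M ≤ Q by rw [hQdef]; nlinarith) hu huK
          have hcast : ((b : ℤ) - b') • (-w) = (b - b') • (-w) := by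
            rw [show ((b : ℤ) - b') = ((b - b' : ℕ) : ℤ) by omega, natCast_zsmul]
          rw [hcast]
          exact hper
        have hinj : Set.InjOn (fun q : V k × ℕ => q.1 + (z + q.2 • (-w)))
            ↑(T ×ˢ Finset.range (p + 1)) := by
          rintro ⟨t, i⟩ hx ⟨t', i'⟩ hx' heq
          rw [Finset.mem_coe, Finset.mem_product, Finset.mem_range] at hx hx'
          have heq2 : t + i • (-w) = t' + i' • (-w) := by
            have h1 : t + (z + i • (-w)) = t' + (z + i' • (-w)) := heq
            have h2 : (t + i • (-w)) + z = (t' + i' • (-w)) + z := by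
              rw [show (t + i • (-w)) + z = t + (z + i • (-w)) by abel, h1]
              abel
            exact add_left_injective _ h2
          rcases lt_trichotomy i i' with hii | hii | hii
          · exact absurd (hbadmk t' t i' i hx'.1 hx.1 hii hx'.2 heq2.symm) id
          · have ht : t = t' := by
              subst hii
              exact add_left_injective _ heq2
            rw [ht, hii]
          · exact absurd (hbadmk t t' i i' hx.1 hx'.1 hii hx.2 heq2) id
        have h6 := Finset.card_le_card_of_injOn _ hmaps hinj
        rwa [Finset.card_product, Finset.card_range] at h6
      -- pass to the limit
      have hlim : C.lamP j Q ≤ 1 / ((p : ℝ) + 1) := by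
        refine le_of_tendsto (C.tendsto_lamP j Q hj) ?_
        filter_upwards [C.card_top.eventually_ge_atTop 1] with n hn
        have hpos : (0 : ℝ) < ((C.Lam n).card : ℝ) := by exact_mod_cast hn
        rw [div_le_div_iff₀ hpos (by positivity)]
        have h7 := hcount n
        have h8 : (((C.Lam n).filter fun t =>
            window C.prec (↑(C.Lam n)) t Q = C.D j ∩ Kc k Q).card : ℝ) * ((p : ℝ) + 1)
            ≤ ((C.Lam n).card : ℝ) := by exact_mod_cast h7
        linarith
      have hfinal : C.lam j ≤ 1 / ((p : ℝ) + 1) := le_trans (lam_le_lamP hj Q) hlim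
      have hlt : 1 / ((p : ℝ) + 1) < C.lam j := by
        rw [div_lt_iff₀ (by positivity)]
        rw [div_lt_iff₀ hlampos] at hn₀
        have hp1 : (n₀ : ℝ) ≤ (p : ℝ) := by exact_mod_cast le_max_left _ _
        nlinarith
      linarith

end Big
section Rank

variable {k : ℕ} {prec : V k → V k → Prop}

theorem lattice_full_rank (ho : IsTransOrder prec) {A : Set (V k)}
    (hA : A ⊆ {t | prec 0 t}) (hrank : latticeRank (Lset prec A) = k) :
    ∃ N : ℕ, 1 ≤ N ∧ ∀ v : V k, (N : ℤ) • v ∈ Lset prec A := by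
  classical
  set L : AddSubgroup (V k) :=
    { carrier := Lset prec A
      zero_mem' := zero_mem_Lset hA
      add_mem' := fun h1 h2 => Lset_add ho hA h1 h2
      neg_mem' := fun h => neg_mem_Lset h } with hLdef
  have hclos : AddSubgroup.closure (Lset prec A) = L := AddSubgroup.closure_eq L
  have hrank' : Module.finrank ℤ (AddSubgroup.toIntSubmodule L) = k := by
    calc Module.finrank ℤ (AddSubgroup.toIntSubmodule L)
        = latticeRank (Lset prec A) := by
          unfold latticeRank
          rw [hclos]
      _ = k := hrank
  obtain ⟨m, bW⟩ := Submodule.basisOfPid (Pi.basisFun ℤ (Fin k))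
    (AddSubgroup.toIntSubmodule L)
  have hmk : m = k := by
    have h1 := Module.finrank_eq_card_basis bW
    rw [Fintype.card_fin] at h1
    rw [h1] at hrank'
    exact hrank'
  let b : Module.Basis (Fin k) ℤ (AddSubgroup.toIntSubmodule L) := bW.reindex (finCongr hmk)
  set Amat : Matrix (Fin k) (Fin k) ℤ := Matrix.of (fun i j' => ((b j' : V k) i)) with hAmat
  have hmul : ∀ u : Fin k → ℤ, Amat.mulVec u = ∑ j', u j' • ((b j' : V k)) := by
    intro u
    funext i
    rw [Finset.sum_apply]
    simp only [Matrix.mulVec, dotProduct, hAmat, Matrix.of_apply, Pi.smul_apply,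
      smul_eq_mul]
    exact Finset.sum_congr rfl (fun j' _ => mul_comm _ _)
  have hmem : ∀ u : Fin k → ℤ, Amat.mulVec u ∈ AddSubgroup.toIntSubmodule L := by
    intro u
    rw [hmul]
    exact Submodule.sum_mem _ (fun j' _ => Submodule.smul_mem _ _ (SetLike.coe_mem (b j')))
  have hdet : Amat.det ≠ 0 := by
    intro h0
    obtain ⟨v, hvne, hv0⟩ := Matrix.exists_mulVec_eq_zero_iff.2 h0
    have hli : LinearIndependent ℤ (fun j' => ((b j' : V k))) := by
      have h1 := b.linearIndependent
      exact h1.map' (AddSubgroup.toIntSubmodule L).subtype (Submodule.ker_subtype _)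
    have h3 := Fintype.linearIndependent_iff.1 hli v (by rw [← hmul]; exact hv0)
    exact hvne (funext h3)
  refine ⟨Amat.det.natAbs, Int.natAbs_pos.2 hdet, fun v => ?_⟩
  have h1 : Amat.mulVec (Amat.adjugate.mulVec v) = Amat.det • v := by
    rw [Matrix.mulVec_mulVec, Matrix.mul_adjugate, Matrix.smul_mulVec,
      Matrix.one_mulVec]
  have h2 : Amat.det • v ∈ AddSubgroup.toIntSubmodule L := by
    rw [← h1]
    exact hmem _
  have hLset : Amat.det • v ∈ Lset prec A := h2
  rcases Int.natAbs_eq Amat.det with h | h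
  · rw [← h]
    exact hLset
  · have h4 := neg_mem_Lset hLset
    rw [h, neg_smul, neg_neg] at h4
    exact h4

end Rank

/-- consequences of the Translation Invariance Property `TIP_j`.
The family `D_{l_0},…,D_{l_{b_j}}` (with `l_0 = j`, `z_{l_0} = 0`) is given as data;
index `i` satisfies `(TIP_j)` iff `TIPat prec (D j) (zl i)` holds. -/
theorem stmt3 (k : ℕ) (hk : 1 ≤ k) (C : CondD k) (j : ℕ) (hj : (j : ℕ∞) < C.q)
    (b : ℕ) (Dl : Fin (b + 1) → Set (V k)) (zl : Fin (b + 1) → V k)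
    (hz0 : zl 0 = 0) (hD0 : Dl 0 = C.D j)
    (hzl : ∀ i, i ≠ 0 → zl i ∈ C.D j \ Gset C.prec (C.D j))
    (hDl : ∀ i, Dl i = shiftPos C.prec (C.D j) (zl i))
    (hinj : Function.Injective Dl)
    (hsurj : ∀ z ∈ C.D j \ Gset C.prec (C.D j), ∃ i, i ≠ 0 ∧ shiftPos C.prec (C.D j) z = Dl i)
    (lamD : Fin (b + 1) → ℝ)
    (hlamD : ∀ i, ∃ l : ℕ, (l : ℕ∞) < C.q ∧ C.D l = Dl i ∧ C.lam l = lamD i) :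
    -- (a)
    (∀ i, TIPat C.prec (C.D j) (zl i) →
        Lset C.prec (Dl i) = Lset C.prec (C.D j) ∧ lamD i = C.lam j) ∧
    -- (b)
    (latticeRank (Lset C.prec (C.D j)) = k → ∀ i, TIPat C.prec (C.D j) (zl i)) ∧
    -- (c)
    ((∃ c : ℕ, C.D j ⊆ Kc k c) → ∀ i, ¬ TIPat C.prec (C.D j) (zl i)) ∧
    -- (d)
    (∀ i, TIPat C.prec (C.D j) (zl i) → Dhat C.prec (Dl i) = Dhat C.prec (C.D j)) ∧
    -- (e)
    (∀ s ∈ Lset C.prec (C.D j),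
        tr (Dhat C.prec (C.D j) ∪ {0} ∪ (-(Dhat C.prec (C.D j)))) s =
          Dhat C.prec (C.D j) ∪ {0} ∪ (-(Dhat C.prec (C.D j)))) := by
  classical
  have ho := C.ord
  have hA : C.D j ⊆ {t | C.prec 0 t} := C.D_subset j hj
  have main : ∀ i, i ≠ 0 → TIPat C.prec (C.D j) (zl i) →
      ∃ x v y', x ∈ C.D j ∧ y' ∈ Gset C.prec (C.D j) ∧ C.prec x y' ∧ C.prec v y' ∧
        shiftPos C.prec (C.D j) x = Dl i ∧ v ∈ Dl i ∧
        shiftPos C.prec (Dl i) v = C.D j ∧ Gset C.prec (Dl i) = Gset C.prec (C.D j) := by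
    intro i hine ht
    obtain ⟨hziD, _⟩ := hzl i hine
    obtain ⟨x, y', hxD, hy'G, hxy', hsh⟩ := nice_of_tip C hj hziD ht
    have hsh' : shiftPos C.prec (C.D j) x = Dl i := by rw [hsh, ← hDl i]
    obtain ⟨v, hvB, hBv, hvy, hGeq⟩ := nice_pack ho hA hxD hy'G hxy' hsh'
    exact ⟨x, v, y', hxD, hy'G, hxy', hvy, hsh', hvB, hBv, hGeq⟩
  refine ⟨?_, ?_, ?_, ?_, ?_⟩
  · -- (a)
    intro i ht
    rcases eq_or_ne i 0 with rfl | hine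
    · refine ⟨by rw [hD0], ?_⟩
      obtain ⟨l, hlq, hDleq, hlameq⟩ := hlamD 0
      have hlj : l = j := by
        by_contra hne
        exact C.D_ne l j hlq hj hne (by rw [hDleq, hD0])
      rw [← hlameq, hlj]
    · obtain ⟨x, v, y', hxD, hy'G, hxy', hvy, hshx, hvB, hBv, hGeq⟩ := main i hine ht
      refine ⟨?_, ?_⟩
      · unfold Lset
        rw [hGeq]
      · obtain ⟨l, hlq, hDleq, hlameq⟩ := hlamD i
        have h1 : C.lam j ≤ C.lam l :=
          lam_shift_le hj hlq hxD (by rw [hshx]; exact hDleq.symm)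
        have h2 : C.lam l ≤ C.lam j :=
          lam_shift_le hlq hj (by rw [hDleq]; exact hvB) (by rw [hDleq]; exact hBv)
        rw [← hlameq]
        linarith
  · -- (b)
    intro hrank i
    obtain ⟨N, hN1, hNL⟩ := lattice_full_rank ho hA hrank
    rcases eq_or_ne i 0 with rfl | hine
    · rw [hz0]
      have hgne : (N : ℤ) • (fun _ : Fin k => (1 : ℤ)) ≠ (0 : V k) := by
        intro h
        have h1 := congrFun h ⟨0, hk⟩
        have h2 : ((N : ℤ)) * 1 = 0 := h1
        simp only [mul_one] at h2
        omega
      have hgL : (N : ℤ) • (fun _ : Fin k => (1 : ℤ)) ∈ Lset C.prec (C.D j) := hNL _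
      have hex : ∃ g', g' ∈ Lset C.prec (C.D j) ∧ C.prec 0 g' := by
        rcases prec_trichotomy ho ((N : ℤ) • fun _ : Fin k => (1 : ℤ)) with h0 | hpos | hneg
        · exact absurd h0 hgne
        · exact ⟨_, hgL, hpos⟩
        · exact ⟨_, neg_mem_Lset hgL, pos_neg_of_neg ho hneg⟩
      obtain ⟨g', hg'L, hg'pos⟩ := hex
      have hg'G : g' ∈ Gset C.prec (C.D j) := Lset_pos_mem_Gset ho hA hg'L hg'pos
      rw [tipat_iff]
      refine ⟨g', ?_, ?_, g' + g', Gset_add ho hA hg'G hg'G, ?_⟩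
      · rw [shiftPos_zero hA]
        exact hg'L
      · simpa using hg'pos
      · have h1 := ho.invariant 0 g' g' hg'pos
        rw [zero_add] at h1
        rw [add_zero]
        exact h1
    · obtain ⟨hziD, _⟩ := hzl i hine
      have hzpos : C.prec 0 (zl i) := hA hziD
      have hyL : (N : ℤ) • (zl i + zl i) ∈ Lset C.prec (C.D j) := hNL _
      have hypos : C.prec 0 ((N : ℤ) • (zl i + zl i)) :=
        zsmul_prec_pos ho (pos_add_pos ho hzpos hzpos) (by exact_mod_cast hN1)
      have hyG := Lset_pos_mem_Gset ho hA hyL hypos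
      rw [tipat_iff]
      refine ⟨0, zero_mem_Lset shiftPos_subset_pos, by simpa using hzpos, _, hyG, ?_⟩
      rw [zero_add, prec_iff_sub_pos ho]
      have heq : (N : ℤ) • (zl i + zl i) - zl i = (2 * (N : ℤ) - 1) • (zl i) := by
        rw [sub_zsmul, one_zsmul, show (2 * (N : ℤ)) = (N : ℤ) + (N : ℤ) by ring, add_zsmul,
          smul_add]
        abel
      rw [heq]
      exact zsmul_prec_pos ho hzpos (by omega)
  · -- (c)
    rintro ⟨c, hc⟩ i ht
    obtain ⟨w, hwL, hwpos, y, hyG, hxy⟩ := tipat_iff.1 ht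
    have hyne : y ≠ 0 := fun h => ho.irrefl 0 (ho.trans hwpos (h ▸ hxy))
    obtain ⟨hypos, hyD⟩ := Gset_pos_mem hA hyG hyne
    have hmul : ∀ n : ℕ, (n + 1) • y ∈ C.D j := by
      intro n
      induction n with
      | zero => simpa using hyD
      | succ m ih =>
          have h1 := (Gset_shift_mem hA hyG (nsmul_prec_pos ho hypos (m + 1) (by omega))).1 ih
          rwa [← succ_nsmul] at h1
    have hKfin : (Kc k c).Finite := by
      have h2 : Kc k c ⊆ Set.univ.pi (fun _ : Fin k => Set.Icc (-(c : ℤ)) (c : ℤ)) := by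
        intro t htK
        rw [Set.mem_pi]
        intro i₁ _
        rw [Set.mem_Icc]
        exact abs_le.1 (htK i₁)
      exact (Set.Finite.pi (fun _ => Set.finite_Icc _ _)).subset h2
    have hinj2 : Function.Injective (fun n : ℕ => (n + 1) • y) := by
      intro n m h
      obtain ⟨i₀, hi₀⟩ : ∃ i₀, y i₀ ≠ 0 := by
        by_contra hno
        push_neg at hno
        exact hyne (funext hno)
      have h1 := congrFun h i₀
      have h2 : ((n : ℤ) + 1) * y i₀ = ((m : ℤ) + 1) * y i₀ := by
        have h3 : ((n + 1 : ℕ) : ℤ) * y i₀ = ((m + 1 : ℕ) : ℤ) * y i₀ := by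
          rw [← nsmul_eq_mul, ← nsmul_eq_mul]
          exact h1
        push_cast at h3
        exact h3
      have h4 := mul_right_cancel₀ hi₀ h2
      omega
    have hsub : Set.range (fun n : ℕ => (n + 1) • y) ⊆ Kc k c := by
      rintro _ ⟨n, rfl⟩
      exact hc (hmul n)
    exact Set.infinite_range_of_injective hinj2 (hKfin.subset hsub)
  · -- (d)
    intro i ht
    rcases eq_or_ne i 0 with rfl | hine
    · rw [hD0]
    · obtain ⟨x, v, y', hxD, hy'G, hxy', hvy, hshx, hvB, hBv, hGeq⟩ := main i hine ht
      have hBpos : Dl i ⊆ {t | C.prec 0 t} := by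
        rw [hDl i]
        exact shiftPos_subset_pos
      apply Set.Subset.antisymm
      · exact dhat_subset ho hA hGeq hxD hshx hy'G hxy'
      · exact dhat_subset ho hBpos hGeq.symm hvB hBv (by rw [hGeq]; exact hy'G) hvy
  · -- (e)
    intro s hs
    have hkey : ∀ s' ∈ Lset C.prec (C.D j),
        ∀ a ∈ Dhat C.prec (C.D j) ∪ {0} ∪ (-(Dhat C.prec (C.D j))),
        a + s' ∈ Dhat C.prec (C.D j) ∪ {0} ∪ (-(Dhat C.prec (C.D j))) := by
      intro s' hs' a ha
      rcases ha with (ha | ha) | ha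
      · exact dhat_shift ho hA ha hs'
      · rw [Set.mem_singleton_iff] at ha
        subst ha
        rw [zero_add]
        rcases eq_or_ne s' 0 with rfl | hne
        · left; right; rfl
        · rcases mem_Lset_iff.1 hs' with h | h
          · left; left
            exact Gpos_mem_Dhat ho hA h hne
          · right
            rw [Set.mem_neg]
            exact Gpos_mem_Dhat ho hA h (by simpa using hne)
      · rw [Set.mem_neg] at ha
        have h1 := dhat_shift ho hA ha (neg_mem_Lset hs')
        rcases h1 with (h1 | h1) | h1
        · right
          rw [Set.mem_neg, show -(a + s') = -a + -s' by abel]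
          exact h1
        · left; right
          rw [Set.mem_singleton_iff] at h1 ⊢
          have h2 : -(a + s') = 0 := by
            rw [show -(a + s') = -a + -s' by abel]
            exact h1
          simpa using congrArg Neg.neg h2
        · left; left
          rw [Set.mem_neg] at h1
          rwa [show -(-a + -s') = a + s' by abel] at h1
    ext u
    constructor
    · rintro ⟨v', hv', rfl⟩
      exact hkey s hs v' hv'
    · intro hu
      exact ⟨u + -s, hkey (-s) (neg_mem_Lset hs) u hu, by show u + -s + s = u; abel⟩

end Paper
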